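/- Let N > 1, let T : [0,1) → [0,1) be a right-continuous interval exchange transformation with N−1 discontinuities, let Δ = [a,b) ⊆ [0,1), and let T_Δ be the first return map induced by T on Δ. If α ∈ Δ is a discontinuity of T_Δ, then, writing h = h_{Δ,T}(α): (a) T^i α ∉ [a,b) for all i ∈ {1, …, h−1}; (b) T^h α = T_Δ α; and (c) at least one of the following holds: (c.1) T^i α is a discontinuity of T for some i ∈ {0, …, h−1}; (c.2) T^h α = a; (c.3) there is i ∈ {1, …, h−1} such that lim_{x→α⁻} T^i x = b. -/

import Mathlib

open Set Filter MeasureTheory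

namespace DiscAux

structure IETData (T : ℝ → ℝ) where
  M : ℕ
  p : ℕ → ℝ
  σ : ℕ → ℝ
  hM : 1 ≤ M
  hp0 : p 0 = 0
  hpM : p M = 1
  hmono : ∀ i < M, p i < p (i+1)
  hpiece : ∀ i < M, ∀ x ∈ Set.Ico (p i) (p (i+1)), T x = x + σ i
  hbij : Set.BijOn T (Set.Ico 0 1) (Set.Ico 0 1)

variable {T : ℝ → ℝ}

lemma IETData.mapsTo (d : IETData T) : MapsTo T (Ico 0 1) (Ico 0 1) := d.hbij.mapsTo

lemma IETData.iter_mapsTo (d : IETData T) (n : ℕ) : MapsTo T^[n] (Ico 0 1) (Ico 0 1) :=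
  MapsTo.iterate d.mapsTo n

lemma IETData.injOn (d : IETData T) : InjOn T (Ico 0 1) := d.hbij.injOn

lemma IETData.iter_injOn (d : IETData T) (n : ℕ) : InjOn T^[n] (Ico 0 1) := by
  induction n with
  | zero => simpa using injOn_id _
  | succ n ih =>
    intro x hx y hy hxy
    rw [Function.iterate_succ_apply', Function.iterate_succ_apply'] at hxy
    exact ih hx hy (d.injOn (d.iter_mapsTo n hx) (d.iter_mapsTo n hy) hxy)

lemma IETData.cancel (d : IETData T) {x y : ℝ} (hx : x ∈ Ico (0:ℝ) 1) (hy : y ∈ Ico (0:ℝ) 1)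
    {j j' : ℕ} (hjj : j ≤ j') (heq : T^[j] x = T^[j'] y) :
    x = T^[j' - j] y := by
  have h1 : T^[j] (T^[j' - j] y) = T^[j] x := by
    rw [← Function.iterate_add_apply, Nat.add_sub_cancel' hjj, heq]
  exact (d.iter_injOn j hx (d.iter_mapsTo _ hy) h1.symm)

lemma IETData.p_lt_p (d : IETData T) {i j : ℕ} (hij : i < j) (hj : j ≤ d.M) : d.p i < d.p j := by
  induction j with
  | zero => omega
  | succ j ih =>
    rcases Nat.lt_or_ge i j with h | h
    · exact lt_trans (ih h (by omega)) (d.hmono j (by omega))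
    · have : i = j := by omega
      subst this
      exact d.hmono i (by omega)

open Classical in
lemma IETData.cover (d : IETData T) {w : ℝ} (h0 : 0 ≤ w) (h1 : w < 1) :
    ∃ i, i < d.M ∧ d.p i ≤ w ∧ w < d.p (i+1) := by
  classical
  set P : ℕ → Prop := fun i => d.p i ≤ w with hP
  have hP0 : P 0 := by simp [hP, d.hp0, h0]
  set j := Nat.findGreatest P d.M with hj
  have hjle : j ≤ d.M := Nat.findGreatest_le _
  have hPj : P j := Nat.findGreatest_spec (Nat.zero_le _) hP0
  have hjM : j < d.M := by
    rcases Nat.lt_or_ge j d.M with h | h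
    · exact h
    · exfalso
      have : j = d.M := le_antisymm hjle h
      rw [this] at hPj
      simp only [hP, d.hpM] at hPj
      linarith
  refine ⟨j, hjM, hPj, ?_⟩
  have := Nat.findGreatest_is_greatest (lt_add_one j) (by omega : j + 1 ≤ d.M)
  simpa [hP, not_le] using this

lemma IETData.rightTrans (d : IETData T) {x : ℝ} (hx : x ∈ Ico (0:ℝ) 1) (n : ℕ) :
    ∃ δ > 0, ∀ i ≤ n, ∀ y ∈ Ico x (x + δ), T^[i] y = T^[i] x + (y - x) := by
  induction n with
  | zero =>
    exact ⟨1, one_pos, by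
      rintro i hi y -
      interval_cases i
      simp⟩
  | succ n ih =>
    obtain ⟨δ, hδ, hδ'⟩ := ih
    have hw : T^[n] x ∈ Ico (0:ℝ) 1 := d.iter_mapsTo n hx
    obtain ⟨k, hkM, hk1, hk2⟩ := d.cover hw.1 hw.2
    refine ⟨min δ (d.p (k+1) - T^[n] x), lt_min hδ (by linarith), ?_⟩
    intro i hi y hy
    have hyδ : y ∈ Ico x (x + δ) :=
      ⟨hy.1, lt_of_lt_of_le hy.2 (by simp [min_le_left])⟩
    rcases Nat.lt_or_ge i (n+1) with h | h
    · exact hδ' i (by omega) y hyδ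
    · have hin : i = n + 1 := by omega
      subst hin
      have hTn : T^[n] y = T^[n] x + (y - x) := hδ' n (le_refl n) y hyδ
      have hmem : T^[n] y ∈ Ico (d.p k) (d.p (k+1)) := by
        constructor
        · rw [hTn]; have := hy.1; linarith
        · rw [hTn]
          have : y - x < d.p (k+1) - T^[n] x :=
            lt_of_lt_of_le (by linarith [hy.2]) (min_le_right _ _)
          linarith
      have hmemx : T^[n] x ∈ Ico (d.p k) (d.p (k+1)) := ⟨hk1, hk2⟩
      rw [Function.iterate_succ_apply', Function.iterate_succ_apply',
        d.hpiece k hkM _ hmem, d.hpiece k hkM _ hmemx, hTn]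
      ring


lemma IETData.p_nonneg (d : IETData T) {i : ℕ} (hi : i ≤ d.M) : 0 ≤ d.p i := by
  rcases Nat.eq_zero_or_pos i with h | h
  · simp [h, d.hp0]
  · rw [← d.hp0]; exact le_of_lt (d.p_lt_p h hi)

lemma IETData.p_le_one (d : IETData T) {i : ℕ} (hi : i ≤ d.M) : d.p i ≤ 1 := by
  rcases Nat.eq_or_lt_of_le hi with h | h
  · rw [h, d.hpM]
  · rw [← d.hpM]; exact le_of_lt (d.p_lt_p h (le_refl _))

lemma IETData.piece_subset (d : IETData T) {i : ℕ} (hi : i < d.M) :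
    Ico (d.p i) (d.p (i+1)) ⊆ Ico (0:ℝ) 1 := by
  intro y hy
  exact ⟨le_trans (d.p_nonneg (le_of_lt hi)) hy.1,
    lt_of_lt_of_le hy.2 (d.p_le_one hi)⟩

lemma IETData.vol_image (d : IETData T) {A : Set ℝ} (hA : A ⊆ Ico (0:ℝ) 1)
    (hAm : MeasurableSet A) :
    MeasurableSet (T '' A) ∧ volume (T '' A) = volume A := by
  classical
  set P : ℕ → Set ℝ := fun i => A ∩ Ico (d.p i) (d.p (i+1)) with hP
  have hPm : ∀ i, MeasurableSet (P i) := fun i => hAm.inter measurableSet_Ico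
  have hPd : (↑(Finset.range d.M) : Set ℕ).PairwiseDisjoint P := by
    intro i hi j hj hij
    simp only [Finset.coe_range, mem_Iio] at hi hj
    apply Set.disjoint_left.2
    intro y hyi hyj
    rcases lt_or_gt_of_ne hij with h | h
    · have h1 : y < d.p (i+1) := hyi.2.2
      have h2 : d.p j ≤ y := hyj.2.1
      have : d.p (i+1) ≤ d.p j := by
        rcases Nat.lt_or_ge (i+1) j with hh | hh
        · exact le_of_lt (d.p_lt_p hh (le_of_lt hj))
        · have hij2 : i + 1 = j := by omega
          exact le_of_eq (congrArg d.p hij2)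
      linarith
    · have h1 : y < d.p (j+1) := hyj.2.2
      have h2 : d.p i ≤ y := hyi.2.1
      have : d.p (j+1) ≤ d.p i := by
        rcases Nat.lt_or_ge (j+1) i with hh | hh
        · exact le_of_lt (d.p_lt_p hh (le_of_lt hi))
        · have hij2 : j + 1 = i := by omega
          exact le_of_eq (congrArg d.p hij2)
      linarith
  have hcover : A = ⋃ i ∈ Finset.range d.M, P i := by
    apply Set.Subset.antisymm
    · intro y hy
      obtain ⟨i, hiM, h1, h2⟩ := d.cover (hA hy).1 (hA hy).2
      exact Set.mem_biUnion (Finset.mem_range.2 hiM) ⟨hy, h1, h2⟩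
    · intro y hy
      simp only [Set.mem_iUnion] at hy
      obtain ⟨i, -, hy, -⟩ := hy
      exact hy
  have himg : ∀ i ∈ Finset.range d.M, T '' (P i) = (fun y => y - d.σ i) ⁻¹' (P i) := by
    intro i hi
    have hiM := Finset.mem_range.1 hi
    ext y
    constructor
    · rintro ⟨v, hv, rfl⟩
      have : T v = v + d.σ i := d.hpiece i hiM v hv.2
      simpa [this] using hv
    · intro hy
      refine ⟨y - d.σ i, hy, ?_⟩
      rw [d.hpiece i hiM _ hy.2]
      ring
  have himgM : ∀ i ∈ Finset.range d.M, MeasurableSet (T '' (P i)) := by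
    intro i hi
    rw [himg i hi]
    exact (measurable_sub_const (d.σ i)) (hPm i)
  have himgV : ∀ i ∈ Finset.range d.M, volume (T '' (P i)) = volume (P i) := by
    intro i hi
    rw [himg i hi]
    simpa [sub_eq_add_neg] using measure_preimage_add_right volume (-(d.σ i)) (P i)
  have hTA : T '' A = ⋃ i ∈ Finset.range d.M, T '' (P i) := by
    conv_lhs => rw [hcover]
    rw [Set.image_iUnion₂]
  have hTd : (↑(Finset.range d.M) : Set ℕ).PairwiseDisjoint (fun i => T '' (P i)) := by
    intro i hi j hj hij
    have hPi : P i ⊆ Ico (0:ℝ) 1 := fun y hy => hA hy.1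
    have hPj : P j ⊆ Ico (0:ℝ) 1 := fun y hy => hA hy.1
    have := d.injOn.image_inter hPi hPj
    apply Set.disjoint_left.2
    intro y hyi hyj
    have : y ∈ T '' (P i ∩ P j) := by rw [this]; exact ⟨hyi, hyj⟩
    rw [Set.disjoint_iff_inter_eq_empty.1 (hPd hi hj hij)] at this
    simpa using this
  constructor
  · rw [hTA]; exact MeasurableSet.biUnion (Finset.range d.M).countable_toSet himgM
  · rw [hTA, measure_biUnion_finset hTd himgM]
    rw [Finset.sum_congr rfl himgV]
    rw [← measure_biUnion_finset hPd (fun i _ => hPm i), ← hcover]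

lemma IETData.iter_vol (d : IETData T) {A : Set ℝ} (hA : A ⊆ Ico (0:ℝ) 1)
    (hAm : MeasurableSet A) (n : ℕ) :
    MeasurableSet (T^[n] '' A) ∧ volume (T^[n] '' A) = volume A := by
  induction n with
  | zero =>
    rw [Function.iterate_zero, Set.image_id]
    exact ⟨hAm, rfl⟩
  | succ n ih =>
    have hsub : T^[n] '' A ⊆ Ico (0:ℝ) 1 := by
      rw [← Set.mapsTo_iff_image_subset]
      exact (d.iter_mapsTo n).mono_left hA
    have := d.vol_image hsub ih.1
    rw [Function.iterate_succ', Set.image_comp]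
    exact ⟨this.1, this.2.trans ih.2⟩

/-- No nonempty right-interval inside `Δ` can avoid returning to `Δ` forever. -/
lemma IETData.no_avoid (d : IETData T) {a b x η : ℝ}
    (hsub : Ico a b ⊆ Ico (0:ℝ) 1) (hη : 0 < η)
    (hI : Ico x (x + η) ⊆ Ico a b)
    (havoid : ∀ y ∈ Ico x (x + η), ∀ n, 1 ≤ n → T^[n] y ∉ Ico a b) : False := by
  classical
  set I : Set ℝ := Ico x (x + η) with hIdef
  have hI01 : I ⊆ Ico (0:ℝ) 1 := fun y hy => hsub (hI hy)
  have hIm : MeasurableSet I := measurableSet_Ico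
  obtain ⟨K, hK⟩ := exists_nat_gt (1 / η)
  set F := Finset.Icc 1 K with hF
  have hdisj : (↑F : Set ℕ).PairwiseDisjoint (fun n => T^[n] '' I) := by
    intro n hn m hm hnm
    simp only [hF, Finset.coe_Icc, mem_Icc] at hn hm
    apply Set.disjoint_left.2
    rintro w ⟨y, hy, rfl⟩ ⟨y', hy', heq⟩
    rcases le_or_gt n m with h | h
    · rcases Nat.eq_or_lt_of_le h with hh | hh
      · exact hnm (by omega)
      · have := d.cancel (hI01 hy) (hI01 hy') (le_of_lt hh) heq.symm
        have hret : T^[m - n] y' ∈ Ico a b := hI (this ▸ hy)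
        exact havoid y' hy' (m - n) (by omega) hret
    · have := d.cancel (hI01 hy') (hI01 hy) (le_of_lt h) heq
      have hret : T^[n - m] y ∈ Ico a b := hI (this ▸ hy')
      exact havoid y hy (n - m) (by omega) hret
  have hmeas : ∀ n ∈ F, MeasurableSet (T^[n] '' I) := fun n _ => (d.iter_vol hI01 hIm n).1
  have hsum : volume (⋃ n ∈ F, T^[n] '' I) = ∑ n ∈ F, volume (T^[n] '' I) :=
    measure_biUnion_finset hdisj hmeas
  have hsub2 : (⋃ n ∈ F, T^[n] '' I) ⊆ Ico (0:ℝ) 1 := by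
    intro w hw
    simp only [Set.mem_iUnion] at hw
    obtain ⟨n, -, y, hy, rfl⟩ := hw
    exact d.iter_mapsTo n (hI01 hy)
  have hle : ∑ n ∈ F, volume (T^[n] '' I) ≤ 1 := by
    rw [← hsum]
    calc volume (⋃ n ∈ F, T^[n] '' I) ≤ volume (Ico (0:ℝ) 1) := measure_mono hsub2
    _ = 1 := by simp
  have hvols : ∀ n ∈ F, volume (T^[n] '' I) = ENNReal.ofReal η := by
    intro n _
    rw [(d.iter_vol hI01 hIm n).2, hIdef, Real.volume_Ico]
    ring_nf
  rw [Finset.sum_congr rfl hvols, Finset.sum_const, Nat.card_Icc] at hle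
  have hcard : (K + 1 - 1) = K := by omega
  rw [hcard, nsmul_eq_mul, ← ENNReal.ofReal_natCast K, ← ENNReal.ofReal_mul (by positivity)] at hle
  have h1 : ENNReal.ofReal ((K:ℝ) * η) ≤ ENNReal.ofReal 1 := by
    simpa using hle
  have : (K : ℝ) * η ≤ 1 := (ENNReal.ofReal_le_ofReal_iff (by norm_num)).1 h1
  have hK2 : 1 / η < (K:ℝ) := hK
  rw [div_lt_iff₀ hη] at hK2
  linarith




/-- `T^[j]` acts as a translation on a left neighbourhood `(z-δ, z]` of `z`. -/
def LeftT (T : ℝ → ℝ) (j : ℕ) (z : ℝ) : Prop :=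
  ∃ δ > 0, ∀ y ∈ Ioc (z - δ) z, T^[j] y = T^[j] z - (z - y)

lemma leftT_zero (T : ℝ → ℝ) (z : ℝ) : LeftT T 0 z :=
  ⟨1, one_pos, fun y _ => by simp⟩

lemma IETData.leftT_dichot (d : IETData T) {z : ℝ} (hz0 : 0 < z) (hz1 : z < 1)
    (j : ℕ) (hLT : LeftT T j z) :
    LeftT T (j+1) z ∨ (∃ i, 1 ≤ i ∧ i < d.M ∧ T^[j] z = d.p i) := by
  obtain ⟨δ, hδ, hδ'⟩ := hLT
  set w := T^[j] z with hw
  have hw01 : w ∈ Ico (0:ℝ) 1 := d.iter_mapsTo j ⟨le_of_lt hz0, hz1⟩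
  set ε := min δ z / 2 with hε
  have hmm : 0 < min δ z := lt_min hδ hz0
  have hεδ : ε < δ := by
    have h1 : min δ z ≤ δ := min_le_left _ _
    rw [hε]; linarith
  have hεz : ε < z := by
    have h1 : min δ z ≤ z := min_le_right _ _
    rw [hε]; linarith
  have hεpos : 0 < ε := by rw [hε]; linarith
  have hw0 : 0 < w := by
    have hy : z - ε ∈ Ioc (z - δ) z := ⟨by linarith, by linarith⟩
    have h1 : T^[j] (z - ε) = w - ε := by rw [hδ' _ hy]; ring
    have h2 : (0:ℝ) ≤ T^[j] (z - ε) :=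
      (d.iter_mapsTo j ⟨by linarith, by linarith⟩).1
    rw [h1] at h2
    linarith
  obtain ⟨i, hiM, hi1, hi2⟩ := d.cover hw01.1 hw01.2
  rcases eq_or_lt_of_le hi1 with heq | hlt
  · right
    have hi0 : 1 ≤ i := by
      by_contra h
      have hi00 : i = 0 := by omega
      rw [hi00, d.hp0] at heq
      linarith
    exact ⟨i, hi0, hiM, heq.symm⟩
  · left
    refine ⟨min δ (w - d.p i), lt_min hδ (by linarith), ?_⟩
    intro y hy
    have hyδ : y ∈ Ioc (z - δ) z :=
      ⟨by linarith [hy.1, min_le_left δ (w - d.p i)], hy.2⟩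
    have hTy : T^[j] y = w - (z - y) := hδ' _ hyδ
    have hmem : T^[j] y ∈ Ico (d.p i) (d.p (i+1)) := by
      constructor
      · rw [hTy]
        have h3 : z - y < w - d.p i :=
          lt_of_lt_of_le (by linarith [hy.1]) (min_le_right _ _)
        linarith
      · rw [hTy]
        have h4 : (0:ℝ) ≤ z - y := by linarith [hy.2]
        linarith
    rw [Function.iterate_succ_apply', Function.iterate_succ_apply',
      d.hpiece i hiM _ hmem, ← hw, d.hpiece i hiM _ ⟨hi1, hi2⟩, hTy]
    ring

/-- At a "cut point" `z`, with everything to the left of it in `[x,z)` blocked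
through time `n` and `z` itself entering at time `n`, some iterate of `z` hits
a singular point. -/
lemma IETData.cut (d : IETData T) {a b x z : ℝ} {n : ℕ}
    (hsub : Ico a b ⊆ Ico (0:ℝ) 1) (hx : x ∈ Ico a b) (hzab : z ∈ Ico a b)
    (hxz : x < z) (hn : 1 ≤ n) (hentry : T^[n] z ∈ Ico a b)
    (hblock : ∀ y ∈ Ico x z, ∀ j, 1 ≤ j → j ≤ n → T^[j] y ∉ Ico a b) :
    ∃ j, (j = n ∧ T^[n] z = a) ∨ (j < n ∧ ∃ i, 1 ≤ i ∧ i < d.M ∧ T^[j] z = d.p i) := by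
  classical
  have hz01 : z ∈ Ico (0:ℝ) 1 := hsub hzab
  have hx01 : x ∈ Ico (0:ℝ) 1 := hsub hx
  have hz0 : 0 < z := lt_of_le_of_lt hx01.1 hxz
  set P : ℕ → Prop := fun j => LeftT T j z with hP
  have hP0 : P 0 := leftT_zero T z
  set js : ℕ := Nat.findGreatest P n with hjs
  have hjsn : js ≤ n := Nat.findGreatest_le n
  have hPjs : P js := Nat.findGreatest_spec (Nat.zero_le n) hP0
  rcases eq_or_lt_of_le hjsn with heq | hlt
  · -- left-translation all the way to time n : the cut is caused by `a`
    refine ⟨n, Or.inl ⟨rfl, ?_⟩⟩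
    rw [heq] at hPjs
    obtain ⟨δ, hδ, hδ'⟩ := hPjs
    by_contra hne
    have hgt : a < T^[n] z := lt_of_le_of_ne hentry.1 (Ne.symm hne)
    set ε := min δ (min (T^[n] z - a) (z - x)) / 2 with hε
    have h1 : 0 < min δ (min (T^[n] z - a) (z - x)) :=
      lt_min hδ (lt_min (by linarith) (by linarith))
    have hεpos : 0 < ε := by rw [hε]; linarith
    have hεδ : ε < δ := by
      have := min_le_left δ (min (T^[n] z - a) (z - x))
      rw [hε]; linarith
    have hεa : ε < T^[n] z - a := by
      have h2 := min_le_right δ (min (T^[n] z - a) (z - x))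
      have h3 := min_le_left (T^[n] z - a) (z - x)
      rw [hε]; linarith
    have hεx : ε < z - x := by
      have h2 := min_le_right δ (min (T^[n] z - a) (z - x))
      have h3 := min_le_right (T^[n] z - a) (z - x)
      rw [hε]; linarith
    have hy : z - ε ∈ Ioc (z - δ) z := ⟨by linarith, by linarith⟩
    have hTy : T^[n] (z - ε) = T^[n] z - ε := by rw [hδ' _ hy]; ring
    have hmem : T^[n] (z - ε) ∈ Ico a b := by
      rw [hTy]
      exact ⟨by linarith, by linarith [hentry.2]⟩
    exact hblock (z - ε) ⟨by linarith, by linarith⟩ n hn (le_refl n) hmem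
  · -- the maximal left-translation time is `< n` : breakpoint cause
    have hnot : ¬ P (js + 1) :=
      Nat.findGreatest_is_greatest (Nat.lt_succ_self js) (by omega)
    rcases d.leftT_dichot hz0 hz01.2 js hPjs with hL | hB
    · exact absurd hL hnot
    · exact ⟨js, Or.inr ⟨hlt, hB⟩⟩


/-- Main step: inside any right-window `[x, x+η)` of a non-returning point `x`,
there is a minimal "cut point" `z`. -/
lemma IETData.step (d : IETData T) {a b x : ℝ}
    (hsub : Ico a b ⊆ Ico (0:ℝ) 1) (hx : x ∈ Ico a b)
    (hxno : ∀ n, 1 ≤ n → T^[n] x ∉ Ico a b) {η : ℝ} (hη : 0 < η) (hηb : x + η ≤ b) :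
    ∃ z n, x < z ∧ z < x + η ∧ 1 ≤ n ∧ T^[n] z ∈ Ico a b ∧
      (∀ j, 1 ≤ j → j < n → T^[j] z ∉ Ico a b) ∧
      (∀ y ∈ Ico x z, ∀ j, 1 ≤ j → j ≤ n → T^[j] y ∉ Ico a b) := by
  classical
  have hIsub : Ico x (x + η) ⊆ Ico a b := fun y hy => ⟨le_trans hx.1 hy.1, lt_of_lt_of_le hy.2 hηb⟩
  have hex : ¬ (∀ y ∈ Ico x (x + η), ∀ n, 1 ≤ n → T^[n] y ∉ Ico a b) := by
    intro hcon
    exact d.no_avoid hsub hη hIsub hcon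
  push_neg at hex
  obtain ⟨y0, hy0, n0, hn0, hy0'⟩ := hex
  set NS : Set ℕ := {n | 1 ≤ n ∧ ∃ y ∈ Ico x (x + η), T^[n] y ∈ Ico a b} with hNS
  have hNSne : NS.Nonempty := ⟨n0, hn0, y0, hy0, hy0'⟩
  set n : ℕ := sInf NS with hn
  have hnmem : n ∈ NS := Nat.sInf_mem hNSne
  have hn1 : 1 ≤ n := hnmem.1
  set Y : Set ℝ := {y | y ∈ Ico x (x + η) ∧ T^[n] y ∈ Ico a b} with hY
  have hYne : Y.Nonempty := by
    obtain ⟨y1, hy1, hy1'⟩ := hnmem.2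
    exact ⟨y1, hy1, hy1'⟩
  have hYbdd : BddBelow Y := ⟨x, fun y hy => hy.1.1⟩
  set z : ℝ := sInf Y with hz
  have hzx : x ≤ z := le_csInf hYne (fun y hy => hy.1.1)
  have hzlt : z < x + η := by
    obtain ⟨y1, hy1⟩ := hYne
    exact lt_of_le_of_lt (csInf_le hYbdd hy1) hy1.1.2
  have hz01 : z ∈ Ico (0:ℝ) 1 := hsub (hIsub ⟨hzx, hzlt⟩)
  obtain ⟨δ, hδ, hδ'⟩ := d.rightTrans hz01 n
  -- T^[n] z < b
  have hub : T^[n] z < b := by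
    obtain ⟨y1, hy1, hy1lt⟩ := exists_lt_of_csInf_lt hYne (by linarith : sInf Y < z + δ)
    have hzy : z ≤ y1 := csInf_le hYbdd hy1
    have := hδ' n (le_refl n) y1 ⟨hzy, hy1lt⟩
    have h2 := hy1.2.2
    linarith
  -- T^[n] z ≥ a
  have hlb : a ≤ T^[n] z := by
    by_contra hcon
    push_neg at hcon
    set ε := min δ (a - T^[n] z) with hε
    have hεpos : 0 < ε := lt_min hδ (by linarith)
    obtain ⟨y1, hy1, hy1lt⟩ := exists_lt_of_csInf_lt hYne (by linarith : sInf Y < z + ε)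
    have hzy : z ≤ y1 := csInf_le hYbdd hy1
    have htr := hδ' n (le_refl n) y1 ⟨hzy, by
      have := min_le_left δ (a - T^[n] z)
      have h4 : ε ≤ δ := min_le_left _ _
      linarith⟩
    have h2 := hy1.2.1
    have h3 : y1 - z < a - T^[n] z := by
      have h5 : ε ≤ a - T^[n] z := min_le_right _ _
      linarith
    linarith
  have hzY : z ∈ Y := ⟨⟨hzx, hzlt⟩, hlb, hub⟩
  have hzxstrict : x < z := by
    rcases eq_or_lt_of_le hzx with heq | h
    · exfalso
      exact hxno n hn1 (heq ▸ hzY.2)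
    · exact h
  refine ⟨z, n, hzxstrict, hzlt, hn1, hzY.2, ?_, ?_⟩
  · intro j hj1 hjn hjmem
    have : j ∈ NS := ⟨hj1, z, ⟨hzx, hzlt⟩, hjmem⟩
    have := Nat.sInf_le this
    omega
  · intro y hy j hj1 hjn hjmem
    rcases eq_or_lt_of_le hjn with heq | h
    · -- j = n : y would be in Y, below its infimum
      subst heq
      have : y ∈ Y := ⟨⟨hy.1, lt_trans hy.2 hzlt⟩, hjmem⟩
      have := csInf_le hYbdd this
      rw [← hz] at this
      linarith [hy.2]
    · have : j ∈ NS := ⟨hj1, y, ⟨hy.1, lt_trans hy.2 hzlt⟩, hjmem⟩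
      have := Nat.sInf_le this
      omega

/-- Every point of `Δ = [a,b)` returns to `Δ` under an IET. -/
lemma IETData.recur (d : IETData T) {a b : ℝ} (hsub : Ico a b ⊆ Ico (0:ℝ) 1)
    {x : ℝ} (hx : x ∈ Ico a b) : ∃ n, 1 ≤ n ∧ T^[n] x ∈ Ico a b := by
  classical
  by_contra hcon
  push_neg at hcon
  have hxno : ∀ n, 1 ≤ n → T^[n] x ∉ Ico a b := fun n h1 h2 => (hcon n h1) h2
  set P : ℝ → Prop := fun η => 0 < η ∧ x + η ≤ b with hPdef
  have hstep : ∀ st : {η // P η}, ∃ w : ℝ × ℕ,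
      (x < w.1 ∧ w.1 < x + st.1) ∧ (1 ≤ w.2 ∧ T^[w.2] w.1 ∈ Ico a b) ∧
      (∀ j, 1 ≤ j → j < w.2 → T^[j] w.1 ∉ Ico a b) ∧
      (∀ y ∈ Ico x w.1, ∀ j, 1 ≤ j → j ≤ w.2 → T^[j] y ∉ Ico a b) ∧ P (w.1 - x) := by
    rintro ⟨η, hη1, hη2⟩
    obtain ⟨z, n, h1, h2, h3, h4, h5, h6⟩ := d.step hsub hx hxno hη1 hη2
    exact ⟨(z, n), ⟨h1, h2⟩, ⟨h3, h4⟩, h5, h6, by constructor <;> [linarith; linarith]⟩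
  set W : {η // P η} → ℝ × ℕ := fun st => Classical.choose (hstep st) with hW
  have hWspec := fun st => Classical.choose_spec (hstep st)
  have hbase : P (b - x) := ⟨by linarith [hx.2], by linarith⟩
  set ηseq : ℕ → {η // P η} :=
    fun k => Nat.rec ⟨b - x, hbase⟩ (fun _ st => ⟨(W st).1 - x, (hWspec st).2.2.2.2⟩) k
    with hηseq
  set z : ℕ → ℝ := fun k => (W (ηseq k)).1 with hzdef
  set n : ℕ → ℕ := fun k => (W (ηseq k)).2 with hndef
  have hsucc : ∀ k, (ηseq (k+1) : ℝ) = z k - x := fun k => rfl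
  have hzx : ∀ k, x < z k := fun k => (hWspec (ηseq k)).1.1
  have hzup : ∀ k, z k < x + (ηseq k : ℝ) := fun k => (hWspec (ηseq k)).1.2
  have hzb : ∀ k, z k < b := fun k => lt_of_lt_of_le (hzup k) (ηseq k).2.2
  have hzab : ∀ k, z k ∈ Ico a b := fun k => ⟨le_trans hx.1 (le_of_lt (hzx k)), hzb k⟩
  have hanti : StrictAnti z := by
    apply strictAnti_nat_of_succ_lt
    intro k
    have := hzup (k+1)
    rw [hsucc k] at this
    linarith
  have hcause : ∀ k, ∃ j, (j = n k ∧ T^[n k] (z k) = a) ∨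
      (j < n k ∧ ∃ i, 1 ≤ i ∧ i < d.M ∧ T^[j] (z k) = d.p i) := by
    intro k
    exact d.cut hsub hx (hzab k) (hzx k) (hWspec (ηseq k)).2.1.1
      (hWspec (ηseq k)).2.1.2 (hWspec (ηseq k)).2.2.2.1
  choose jf hjf using hcause
  have hjfn : ∀ k, jf k ≤ n k := by
    intro k
    rcases hjf k with ⟨h, -⟩ | ⟨h, -⟩
    · omega
    · omega
  set S0 : Finset ℝ := insert a ((Finset.Ico 1 d.M).image d.p) with hS0
  have hmapsto : ∀ k ∈ Finset.range (S0.card + 1), T^[jf k] (z k) ∈ S0 := by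
    intro k _
    rcases hjf k with ⟨h1, h2⟩ | ⟨h1, i, hi1, hi2, hi3⟩
    · rw [h1, h2]; exact Finset.mem_insert_self a _
    · rw [hi3]
      exact Finset.mem_insert_of_mem (Finset.mem_image.2 ⟨i, Finset.mem_Ico.2 ⟨hi1, hi2⟩, rfl⟩)
  obtain ⟨k, hk, k', hk', hkk', heq⟩ :=
    Finset.exists_ne_map_eq_of_card_lt_of_maps_to
      (by simp : S0.card < (Finset.range (S0.card + 1)).card) hmapsto
  -- collision argument
  have key : ∀ u v : ℕ, jf u ≤ jf v → u ≠ v →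
      T^[jf u] (z u) = T^[jf v] (z v) → False := by
    intro u v huv hne hequv
    have hzu01 : z u ∈ Ico (0:ℝ) 1 := hsub (hzab u)
    have hzv01 : z v ∈ Ico (0:ℝ) 1 := hsub (hzab v)
    rcases eq_or_lt_of_le huv with hjeq | hjlt
    · rw [hjeq] at hequv
      have := d.iter_injOn (jf v) hzu01 hzv01 hequv
      exact (hanti.injective.ne hne) this
    · have hcan := d.cancel hzu01 hzv01 (le_of_lt hjlt) hequv
      set t := jf v - jf u with ht
      have ht1 : 1 ≤ t := by omega
      have htv : t ≤ jf v := by omega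
      -- avoidance for z v
      have havoid := (hWspec (ηseq v)).2.2.1
      rcases Nat.lt_or_ge t (n v) with hlt | hge
      · exact havoid t ht1 hlt (hcan ▸ hzab u)
      · -- t = n v, so jf v = n v, cause of v is of type `a`
        have h6 := hjfn v
        have htn : t = n v := le_antisymm (le_trans htv h6) hge
        have hjv : jf v = n v := by omega
        rcases hjf v with ⟨-, h2⟩ | ⟨h1, -⟩
        · -- T^[n v] (z v) = a, but it equals z u > a
          have : z u = a := by
            rw [hcan, htn, h2]
          have := hzx u
          have := hx.1
          linarith
        · exact absurd hjv (Nat.ne_of_lt h1)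
  rcases le_or_gt (jf k) (jf k') with h | h
  · exact key k k' h hkk' heq
  · exact key k' k (le_of_lt h) (Ne.symm hkk') heq.symm

end DiscAux

/-- A right-continuous interval exchange transformation of `[c, d)`. -/
def IsIETOn (T : ℝ → ℝ) (c d : ℝ) : Prop :=
  ∃ (N : ℕ) (p : ℕ → ℝ) (σ : ℕ → ℝ),
    1 ≤ N ∧ p 0 = c ∧ p N = d ∧ (∀ i < N, p i < p (i + 1)) ∧
    (∀ i < N, ∀ x ∈ Set.Ico (p i) (p (i + 1)), T x = x + σ i) ∧
    Set.BijOn T (Set.Ico c d) (Set.Ico c d)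

/-- A right-continuous IET of `[0, 1)`. -/
def IsIET (T : ℝ → ℝ) : Prop := IsIETOn T 0 1

/-- The set of discontinuities of `T` viewed as a map of `[c, d)`. -/
def Discont (T : ℝ → ℝ) (c d : ℝ) : Set ℝ :=
  {x | x ∈ Set.Ico c d ∧ ¬ ContinuousWithinAt T (Set.Ico c d) x}

/-- The first return time of `x` to `Δ` under `T`: `min {n ≥ 1 | T^[n] x ∈ Δ}`. -/
noncomputable def retTime (T : ℝ → ℝ) (Δ : Set ℝ) (x : ℝ) : ℕ :=
  sInf {n : ℕ | 1 ≤ n ∧ T^[n] x ∈ Δ}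

/-- The first return (induced) map of `T` on `Δ`. -/
noncomputable def retMap (T : ℝ → ℝ) (Δ : Set ℝ) (x : ℝ) : ℝ :=
  T^[retTime T Δ x] x

/-- If `α ∈ Δ = [a,b)` is a discontinuity of the induced map `T_Δ`, then, with
`h = h_{Δ,T}(α)`: (a) `T^i α ∉ [a,b)` for `1 ≤ i < h`; (b) `T^h α = T_Δ α`; and
(c) either some `T^i α` (`0 ≤ i < h`) is a discontinuity of `T`, or `T^h α = a`,
or for some `1 ≤ i < h` one has `lim_{x → α⁻} T^i x = b`. -/
theorem discontinuity_of_induced_map (N : ℕ) (hN : 1 < N) (T : ℝ → ℝ) (hT : IsIET T)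
    (hfin : (Discont T 0 1).Finite) (hcard : (Discont T 0 1).ncard = N - 1)
    (a b : ℝ) (hsub : Set.Ico a b ⊆ Set.Ico (0 : ℝ) 1)
    (α : ℝ) (hα : α ∈ Discont (retMap T (Set.Ico a b)) a b) :
    (∀ i : ℕ, 1 ≤ i → i < retTime T (Set.Ico a b) α → T^[i] α ∉ Set.Ico a b) ∧
    T^[retTime T (Set.Ico a b) α] α = retMap T (Set.Ico a b) α ∧
    ((∃ i < retTime T (Set.Ico a b) α, T^[i] α ∈ Discont T 0 1) ∨
      T^[retTime T (Set.Ico a b) α] α = a ∨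
      (∃ i : ℕ, 1 ≤ i ∧ i < retTime T (Set.Ico a b) α ∧
        Filter.Tendsto (fun x => T^[i] x) (nhdsWithin α (Set.Iio α)) (nhds b))) := by
  classical
  open Set Filter DiscAux in
  obtain ⟨M, p, σ, hM, hp0, hpM, hmono, hpiece, hbij⟩ := hT
  have d : DiscAux.IETData T := ⟨M, p, σ, hM, hp0, hpM, hmono, hpiece, hbij⟩
  have hαΔ : α ∈ Set.Ico a b := hα.1
  have hα01 : α ∈ Set.Ico (0:ℝ) 1 := hsub hαΔ
  have ha0 : (0:ℝ) ≤ a := by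
    have hab : a < b := lt_of_le_of_lt hαΔ.1 hαΔ.2
    exact (hsub ⟨le_refl a, hab⟩).1
  set S : Set ℕ := {n : ℕ | 1 ≤ n ∧ T^[n] α ∈ Set.Ico a b} with hS
  have hSne : S.Nonempty := by
    obtain ⟨n, hn1, hn2⟩ := d.recur hsub hαΔ
    exact ⟨n, hn1, hn2⟩
  set h : ℕ := retTime T (Set.Ico a b) α with hh
  have hhS : h = sInf S := by rw [hh, retTime]
  have hmem : h ∈ S := by rw [hhS]; exact Nat.sInf_mem hSne
  have h1 : 1 ≤ h := hmem.1
  have hret : T^[h] α ∈ Set.Ico a b := hmem.2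
  have parta : ∀ i : ℕ, 1 ≤ i → i < h → T^[i] α ∉ Set.Ico a b := by
    intro i hi1 hih hmem2
    have hiS : i ∈ S := ⟨hi1, hmem2⟩
    have := hhS ▸ Nat.sInf_le hiS
    omega
  refine ⟨parta, rfl, ?_⟩
  by_contra hc
  push_neg at hc
  obtain ⟨hc1, hc2, hc3⟩ := hc
  -- T is continuous (within [0,1)) at each iterate T^[j] α, j < h
  have hTcont : ∀ j, j < h → ContinuousWithinAt T (Set.Ico 0 1) (T^[j] α) := by
    intro j hj
    by_contra hcont
    exact (hc1 j hj) ⟨d.iter_mapsTo j hα01, hcont⟩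
  have hiter : ∀ i, i ≤ h → ContinuousWithinAt (T^[i]) (Set.Ico 0 1) α := by
    intro i
    induction i with
    | zero => intro _; simpa using continuousWithinAt_id
    | succ i ih =>
      intro hih
      have hi : i < h := by omega
      have hcomp := (hTcont i hi).comp (ih (le_of_lt hi)) (d.iter_mapsTo i)
      rw [← Function.iterate_succ'] at hcomp
      exact hcomp
  set F := nhdsWithin α (Set.Ico a b) with hF
  have hF01 : F ≤ nhdsWithin α (Set.Ico 0 1) := nhdsWithin_mono α hsub
  have htendF : ∀ i, i ≤ h → Filter.Tendsto (T^[i]) F (nhds (T^[i] α)) :=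
    fun i hi => (hiter i hi).mono_left hF01
  -- right translation structure at α
  obtain ⟨δ, hδ, hδ'⟩ := d.rightTrans hα01 h
  have hIcoF : ∀ᶠ x in F, x ∈ Set.Ico α (α + δ) ∨ a < α := by
    rcases eq_or_lt_of_le hαΔ.1 with haα | haα
    · have hmem1 : ∀ᶠ x in F, x ∈ Set.Ico a b := self_mem_nhdsWithin
      have hmem2 : ∀ᶠ x in F, x < α + δ :=
        eventually_nhdsWithin_of_eventually_nhds (eventually_lt_nhds (by linarith))
      filter_upwards [hmem1, hmem2] with x hx1 hx2
      exact Or.inl ⟨haα ▸ hx1.1, hx2⟩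
    · exact Filter.Eventually.of_forall (fun x => Or.inr haα)
  -- each intermediate iterate stays outside [a,b) eventually
  have ev_i : ∀ i, 1 ≤ i → i < h → ∀ᶠ x in F, T^[i] x ∉ Set.Ico a b := by
    intro i hi1 hih
    have hnotin := parta i hi1 hih
    rcases lt_or_ge (T^[i] α) a with hlow | hge
    · have := (htendF i (le_of_lt hih)).eventually_lt_const hlow
      filter_upwards [this] with x hx hmem2
      exact absurd hmem2.1 (not_le.2 hx)
    · have hbge : b ≤ T^[i] α := by
        rcases lt_or_ge (T^[i] α) b with hb2 | hb2
        · exact absurd ⟨hge, hb2⟩ hnotin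
        · exact hb2
      rcases eq_or_lt_of_le hbge with hbeq | hbgt
      · -- T^[i] α = b
        rcases eq_or_lt_of_le hαΔ.1 with haα | haα
        · -- α = a : use the right-translation structure
          filter_upwards [hIcoF] with x hx hmem2
          rcases hx with hx | hx
          · have := hδ' i (le_of_lt hih) x hx
            have hxα : α ≤ x := hx.1
            rw [this, ← hbeq] at hmem2
            have := hmem2.2
            linarith
          · linarith
        · -- α > a : then the left limit of T^[i] at α is b, contradiction with hc3
          exfalso
          apply hc3 i hi1 hih
          have hα0 : 0 < α := lt_of_le_of_lt ha0 haα
          have hle2 : nhdsWithin α (Set.Iio α) ≤ nhdsWithin α (Set.Ico 0 1) := by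
            rw [nhdsWithin_le_iff]
            exact mem_nhdsWithin_of_mem_nhds
              (Filter.mem_of_superset (Ioo_mem_nhds hα0 hα01.2) Set.Ioo_subset_Ico_self)
          have := (hiter i (le_of_lt hih)).mono_left hle2
          rw [hbeq]
          exact this
      · have := (htendF i (le_of_lt hih)).eventually_const_lt hbgt
        filter_upwards [this] with x hx hmem2
        exact absurd hmem2.2 (not_lt.2 (le_of_lt hx))
  have ev_h : ∀ᶠ x in F, T^[h] x ∈ Set.Ico a b := by
    have hne : a ≠ T^[h] α := fun hcon => hc2 hcon.symm
    have haT : a < T^[h] α := lt_of_le_of_ne hret.1 hne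
    have := (htendF h le_rfl) (Ioo_mem_nhds haT hret.2)
    filter_upwards [this] with x hx
    exact ⟨le_of_lt hx.1, hx.2⟩
  have ev_all : ∀ᶠ x in F, ∀ i ∈ Finset.Ico 1 h, T^[i] x ∉ Set.Ico a b := by
    rw [Filter.eventually_all_finset]
    intro i hi
    rw [Finset.mem_Ico] at hi
    exact ev_i i hi.1 hi.2
  have ev_ret : ∀ᶠ x in F, retMap T (Set.Ico a b) x = T^[h] x := by
    filter_upwards [ev_all, ev_h] with x hx1 hx2
    have hrt : retTime T (Set.Ico a b) x = h := by
      rw [retTime]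
      apply le_antisymm
      · exact Nat.sInf_le ⟨h1, hx2⟩
      · set Sx : Set ℕ := {n : ℕ | 1 ≤ n ∧ T^[n] x ∈ Set.Ico a b} with hSx
        have hne2 : Sx.Nonempty := ⟨h, h1, hx2⟩
        have hminmem : sInf Sx ∈ Sx := Nat.sInf_mem hne2
        by_contra hcon
        push_neg at hcon
        have : sInf Sx ∈ Finset.Ico 1 h := Finset.mem_Ico.2 ⟨hminmem.1, hcon⟩
        exact hx1 _ this hminmem.2
    rw [retMap, hrt]
  have hcontret : ContinuousWithinAt (retMap T (Set.Ico a b)) (Set.Ico a b) α := by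
    have htendh : Filter.Tendsto (T^[h]) F (nhds (T^[h] α)) := htendF h le_rfl
    have : retMap T (Set.Ico a b) α = T^[h] α := by rw [retMap, ← hh]
    rw [ContinuousWithinAt, this, ← hF]
    exact htendh.congr' (by filter_upwards [ev_ret] with x hx using hx.symm)
  exact hα.2 hcontret
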